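/- Let n ≥ 3 and p : Fin n → ℝ≥0 satisfy p i ≤ ∑_{j ≠ i} p j for every i. Then there exists a symmetric nonnegative n×n matrix U with zero diagonal such that the i-th row of U sums to p i for every i. -/

import Mathlib

/-- overlap length of intervals [a,b) and [c,d) -/
noncomputable def ov (a b c d : ℝ) : ℝ := max 0 (min b d - max a c)

lemma ov_nonneg (a b c d : ℝ) : 0 ≤ ov a b c d := le_max_left _ _

lemma ov_comm (a b c d : ℝ) : ov a b c d = ov c d a b := by
  simp [ov, min_comm, max_comm]

lemma ov_shift (t a b c d : ℝ) : ov (a+t) (b+t) (c+t) (d+t) = ov a b c d := by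
  unfold ov
  congr 1
  rw [min_add_add_right, max_add_add_right]
  ring

lemma ov_eq (a b c d : ℝ) (hab : a ≤ b) (hcd : c ≤ d) :
    ov a b c d = max a (min b d) - max a (min b c) := by
  simp only [ov, min_def, max_def]
  split_ifs <;> linarith

theorem stmt2 (n : ℕ) (hn : 3 ≤ n) (p : Fin n → ℝ) (hp : ∀ i, 0 ≤ p i)
    (hcond : ∀ i, p i ≤ ∑ j ∈ Finset.univ.erase i, p j) :
    ∃ U : Matrix (Fin n) (Fin n) ℝ,
      U.IsSymm ∧ (∀ i j, 0 ≤ U i j) ∧ (∀ i, U i i = 0) ∧ ∀ i, ∑ j, U i j = p i := by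
  classical
  set q : ℕ → ℝ := fun k => if h : k < n then p ⟨k, h⟩ else 0 with hqdef
  have hq : ∀ j : Fin n, q j.val = p j := by
    intro j; simp [hqdef, j.isLt]
  have hq0 : ∀ k, 0 ≤ q k := by
    intro k; by_cases h : k < n <;> simp [hqdef, h] <;> exact hp _
  set c : ℕ → ℝ := fun m => ∑ k ∈ Finset.range m, q k with hcdef
  have hcsucc : ∀ k, c (k+1) = c k + q k := by
    intro k; simp [hcdef, Finset.sum_range_succ]
  have hcmono : ∀ {a b : ℕ}, a ≤ b → c a ≤ c b := by
    intro a b hab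
    exact Finset.sum_le_sum_of_subset_of_nonneg
      (Finset.range_subset_range.mpr hab) (fun k _ _ => hq0 k)
  have hc0 : ∀ m, 0 ≤ c m := by
    intro m
    simpa [hcdef] using Finset.sum_nonneg (fun k _ => hq0 k)
  have hS : c n = ∑ i, p i := by
    rw [show c n = ∑ k ∈ Finset.range n, q k from rfl,
      ← Fin.sum_univ_eq_sum_range q n]
    exact Finset.sum_congr rfl (fun j _ => hq j)
  set S := c n with hSdef
  set T := S / 2 with hTdef
  have hT0 : 0 ≤ T := by
    rw [hTdef]; have := hc0 n; linarith
  have hpT : ∀ i : Fin n, p i ≤ T := by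
    intro i
    have h1 : ∑ j ∈ Finset.univ.erase i, p j = (∑ j, p j) - p i := by
      rw [← Finset.sum_erase_add Finset.univ p (Finset.mem_univ i)]; ring
    have := hcond i
    rw [h1, ← hS] at this
    rw [hTdef]; linarith
  have hciB : ∀ i : Fin n, c i.val + p i ≤ S := by
    intro i
    have : c (i.val + 1) ≤ c n := hcmono i.isLt
    rw [hcsucc, hq] at this
    exact this
  refine ⟨fun i j => ov (c i) (c i + p i) (c j + T) (c j + p j + T)
      + ov (c i) (c i + p i) (c j - T) (c j + p j - T), ?_, ?_, ?_, ?_⟩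
  · -- symmetry
    have key : ∀ x y z w : ℝ, ov x y (z + T) (w + T) = ov z w (x - T) (y - T) := by
      intro x y z w
      have := ov_shift T z w (x - T) (y - T)
      simp only [sub_add_cancel] at this
      rw [← this, ov_comm]
    ext i j
    change ov (c j) (c j + p j) (c i + T) (c i + p i + T) + ov (c j) (c j + p j) (c i - T) (c i + p i - T) = _
    rw [key (c j) (c j + p j) (c i) (c i + p i),
      show ov (c j) (c j + p j) (c i - T) (c i + p i - T)
        = ov (c i) (c i + p i) (c j + T) (c j + p j + T) from by
          rw [key (c i) (c i + p i) (c j) (c j + p j), ov_comm]]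
    ring
  · intro i j
    exact add_nonneg (ov_nonneg _ _ _ _) (ov_nonneg _ _ _ _)
  · -- diagonal
    intro i
    have h1 : ov (c i) (c i + p i) (c i + T) (c i + p i + T) = 0 := by
      apply max_eq_left
      have h1 := min_le_left (c i + p i) (c i + p i + T)
      have h2 := le_max_right (c i) (c i + T)
      have := hpT i
      linarith
    have h2 : ov (c i) (c i + p i) (c i - T) (c i + p i - T) = 0 := by
      apply max_eq_left
      have h1 := min_le_right (c i + p i) (c i + p i - T)
      have h2 := le_max_left (c i) (c i - T)
      have := hpT i
      linarith
    show ov (c i.val) (c i.val + p i) (c i.val + T) (c i.val + p i + T)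
        + ov (c i.val) (c i.val + p i) (c i.val - T) (c i.val + p i - T) = 0
    rw [h1, h2, add_zero]
  · -- row sums
    intro i
    set A := c i.val with hAdef
    set B := c i.val + p i with hBdef
    have hAB : A ≤ B := by rw [hAdef, hBdef]; linarith [hp i]
    set g : ℝ → ℝ := fun x => max A (min B x) with hgdef
    have step : ∀ j : Fin n,
        ov A B (c j + T) (c j + p j + T) + ov A B (c j - T) (c j + p j - T)
          = (g (c (j.val + 1) + T) - g (c j.val + T))
            + (g (c (j.val + 1) - T) - g (c j.val - T)) := by
      intro j
      rw [ov_eq A B _ _ hAB (by linarith [hp j]),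
        ov_eq A B _ _ hAB (by linarith [hp j]),
        hcsucc j.val, hq j]
    calc (∑ j : Fin n, (ov A B (c j + T) (c j + p j + T)
            + ov A B (c j - T) (c j + p j - T)))
        = ∑ j : Fin n, ((g (c (j.val + 1) + T) - g (c j.val + T))
            + (g (c (j.val + 1) - T) - g (c j.val - T))) :=
          Finset.sum_congr rfl (fun j _ => step j)
      _ = ∑ k ∈ Finset.range n, ((g (c (k + 1) + T) - g (c k + T))
            + (g (c (k + 1) - T) - g (c k - T))) :=
          Fin.sum_univ_eq_sum_range (fun k => (g (c (k + 1) + T) - g (c k + T))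
            + (g (c (k + 1) - T) - g (c k - T))) n
      _ = (g (c n + T) - g (c 0 + T)) + ((g (c n - T) - g (c 0 - T))) := by
          rw [Finset.sum_add_distrib,
            Finset.sum_range_sub (fun k => g (c k + T)),
            Finset.sum_range_sub (fun k => g (c k - T))]
      _ = p i := by
          have hc0' : c 0 = 0 := by simp [hcdef]
          have hST : S - T = T := by rw [hTdef]; ring
          have hg1 : g (c n + T) = B := by
            rw [hgdef]
            have hBS : B ≤ S + T := by linarith [hciB i]
            simp only
            rw [min_eq_left hBS, max_eq_right hAB]
          have hg2 : g (c 0 - T) = A := by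
            rw [hgdef, hc0']
            have h1 : (0:ℝ) - T ≤ B := by
              have := hc0 i.val; linarith [hp i]
            simp only
            rw [min_eq_right h1, max_eq_left (by have := hc0 i.val; linarith)]
          rw [hg1, hg2, hc0', ← hSdef, hST, zero_add]
          rw [hBdef, hAdef]; ring
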